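/- arXiv:0801.1601 — 3 statements merged into one kernel-verified Lean document; each statement's English description precedes it below -/
import Mathlib

section
/- Let q be a prime power, let F be a finite field with q² elements, and let E = {x ∈ F : x^q = x} be the fixed subfield of the field involution σ : x ↦ x^q (so E is a subfield of F with exactly q elements). Then the special unitary group SU₂(F,σ) = {g ∈ SL₂(F) : σ(g)ᵀ · g = 1} is isomorphic as an abstract group to SL₂(E). -/
open Matrix in
lemma sympl' {R : Type} [CommRing R] (l : R) (m : Matrix (Fin 2) (Fin 2) R) :
    mᵀ * !![0, l; -l, 0] * m = m.det • !![0, l; -l, 0] := by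
  ext i j
  fin_cases i <;> fin_cases j <;>
    simp [Matrix.mul_apply, Fin.sum_univ_two, Matrix.det_fin_two] <;> ring

open Matrix in

lemma exists_e (q : ℕ) (hq : 2 ≤ q) (F : Type) [Field F] [Fintype F]
    (hF : Fintype.card F = q ^ 2) : ∃ e : F, e ^ (q + 1) = -1 := by
  classical
  rcases Nat.even_or_odd q with hqe | hqo
  · have h2 : ringChar F = 2 := by
      rw [FiniteField.even_card_iff_char_two, hF]
      obtain ⟨r, rfl⟩ := hqe
      ring_nf
      omega
    haveI : CharP F 2 := h2 ▸ ringChar.charP F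
    exact ⟨1, by rw [one_pow, CharTwo.neg_eq]⟩
  · obtain ⟨g, hg⟩ := IsCyclic.exists_generator (α := Fˣ)
    have horder : orderOf g = q ^ 2 - 1 := by
      rw [orderOf_eq_card_of_forall_mem_zpowers hg, Nat.card_eq_fintype_card,
        Fintype.card_units, hF]
    obtain ⟨r, hr⟩ := hqo
    have hn : q ^ 2 - 1 = 2 * (2 * r ^ 2 + 2 * r) := by subst hr; ring_nf; omega
    have hx2 : ((g : F) ^ ((q ^ 2 - 1) / 2)) ^ 2 = 1 := by
      have h : (g ^ ((q ^ 2 - 1) / 2)) ^ 2 = 1 := by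
        rw [← pow_mul]
        have h2 : (q ^ 2 - 1) / 2 * 2 = q ^ 2 - 1 := by omega
        rw [h2, ← horder, pow_orderOf_eq_one]
      calc ((g : F) ^ ((q ^ 2 - 1) / 2)) ^ 2 = ((g ^ ((q ^ 2 - 1) / 2)) ^ 2 : Fˣ) := by
            push_cast; ring
        _ = 1 := by rw [h]; rfl
    have hxne : ((g : F) ^ ((q ^ 2 - 1) / 2)) ≠ 1 := by
      intro h
      have h1 : (g ^ ((q ^ 2 - 1) / 2) : Fˣ) = 1 := by
        ext; push_cast; exact h
      have hd := orderOf_dvd_of_pow_eq_one h1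
      rw [horder] at hd
      have := Nat.le_of_dvd (by omega) hd
      omega
    have hneg : (g : F) ^ ((q ^ 2 - 1) / 2) = -1 := by
      have h0 : ((g:F) ^ ((q ^ 2 - 1)/2) - 1) * ((g:F) ^ ((q ^ 2 - 1)/2) + 1) = 0 := by
        linear_combination hx2
      rcases mul_eq_zero.mp h0 with h | h
      · exact absurd (sub_eq_zero.mp h) hxne
      · exact eq_neg_of_add_eq_zero_left h
    refine ⟨(g : F) ^ ((q - 1) / 2), ?_⟩
    rw [← pow_mul]
    have heq : (q - 1) / 2 * (q + 1) = (q ^ 2 - 1) / 2 := by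
      subst hr
      have h1 : (2 * r + 1) ^ 2 = 4 * r ^ 2 + 4 * r + 1 := by ring
      rw [h1]
      have h2 : 2 * r + 1 - 1 = 2 * r := rfl
      rw [h2]
      have h3 : 2 * r / 2 = r := by omega
      rw [h3]
      have h4 : 4 * r ^ 2 + 4 * r + 1 - 1 = 2 * (2 * r ^ 2 + 2 * r) := by ring_nf; omega
      rw [h4, Nat.mul_div_cancel_left _ (by norm_num : 0 < 2)]
      ring
    rw [heq, hneg]

open Polynomial in

lemma exists_t (q : ℕ) (hq : 2 ≤ q) (F : Type) [Field F] [Fintype F]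
    (hF : Fintype.card F = q ^ 2) : ∃ t : F, t ^ q ≠ t := by
  classical
  by_contra h
  push_neg at h
  set p : F[X] := X ^ q - X with hp
  have hdeg : p.natDegree = q := by
    rw [hp]
    compute_degree
    · rw [if_neg (by omega : ¬(1 = q))]
      norm_num
    · omega
  have hpne : p ≠ 0 := fun h0 => by simp [h0] at hdeg; omega
  have hsub : (Finset.univ : Finset F) ⊆ p.roots.toFinset := by
    intro a _
    rw [Multiset.mem_toFinset, mem_roots hpne]
    simp [hp, h a]
  have h1 := Finset.card_le_card hsub
  have h2 := Multiset.toFinset_card_le p.roots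
  have h3 := p.card_roots' 
  rw [hdeg] at h3
  have h4 : Fintype.card F ≤ q := by
    calc Fintype.card F = (Finset.univ : Finset F).card := (Finset.card_univ).symm
      _ ≤ _ := h1
      _ ≤ _ := h2
      _ ≤ q := h3
  rw [hF] at h4
  nlinarith



open Matrix in
/-- The special unitary group `SU₂(F,σ) = {g ∈ SL₂(F) : σ(g)ᵀ · g = 1}`, where the
field involution `σ` is applied entrywise. -/
def SU₂ {F : Type} [Field F] (σ : F →+* F) :
    Subgroup (SpecialLinearGroup (Fin 2) F) where
  carrier := {g | ((g : Matrix (Fin 2) (Fin 2) F).map σ)ᵀ * (g : Matrix (Fin 2) (Fin 2) F) = 1}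
  one_mem' := by
    simp [Set.mem_setOf_eq, SpecialLinearGroup.coe_one, Matrix.map_one]
  mul_mem' := by
    intro a b ha hb
    simp only [Set.mem_setOf_eq] at ha hb ⊢
    rw [Matrix.SpecialLinearGroup.coe_mul, Matrix.map_mul, Matrix.transpose_mul]
    calc ((b : Matrix (Fin 2) (Fin 2) F).map σ)ᵀ * ((a : Matrix (Fin 2) (Fin 2) F).map σ)ᵀ *
          ((a : Matrix (Fin 2) (Fin 2) F) * (b : Matrix (Fin 2) (Fin 2) F))
        = ((b : Matrix (Fin 2) (Fin 2) F).map σ)ᵀ *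
            (((a : Matrix (Fin 2) (Fin 2) F).map σ)ᵀ * (a : Matrix (Fin 2) (Fin 2) F)) *
            (b : Matrix (Fin 2) (Fin 2) F) := by noncomm_ring
      _ = 1 := by rw [ha, mul_one, hb]
  inv_mem' := by
    intro g hg
    simp only [Set.mem_setOf_eq] at hg ⊢
    have hBC : (g : Matrix (Fin 2) (Fin 2) F) * ((g⁻¹ : SpecialLinearGroup (Fin 2) F) :
        Matrix (Fin 2) (Fin 2) F) = 1 := by
      rw [← Matrix.SpecialLinearGroup.coe_mul, mul_inv_cancel, Matrix.SpecialLinearGroup.coe_one]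
    have h3 : (((g⁻¹ : SpecialLinearGroup (Fin 2) F) : Matrix (Fin 2) (Fin 2) F).map σ)ᵀ *
        ((g : Matrix (Fin 2) (Fin 2) F).map σ)ᵀ = 1 := by
      rw [← Matrix.transpose_mul, ← Matrix.map_mul, hBC,
        Matrix.map_one σ (map_zero σ) (map_one σ), Matrix.transpose_one]
    calc (((g⁻¹ : SpecialLinearGroup (Fin 2) F) : Matrix (Fin 2) (Fin 2) F).map σ)ᵀ *
          ((g⁻¹ : SpecialLinearGroup (Fin 2) F) : Matrix (Fin 2) (Fin 2) F)
        = (((g⁻¹ : SpecialLinearGroup (Fin 2) F) : Matrix (Fin 2) (Fin 2) F).map σ)ᵀ *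
            (((g : Matrix (Fin 2) (Fin 2) F).map σ)ᵀ * (g : Matrix (Fin 2) (Fin 2) F)) *
            ((g⁻¹ : SpecialLinearGroup (Fin 2) F) : Matrix (Fin 2) (Fin 2) F) := by
          rw [hg, mul_one]
      _ = ((((g⁻¹ : SpecialLinearGroup (Fin 2) F) : Matrix (Fin 2) (Fin 2) F).map σ)ᵀ *
            ((g : Matrix (Fin 2) (Fin 2) F).map σ)ᵀ) *
            ((g : Matrix (Fin 2) (Fin 2) F) *
              ((g⁻¹ : SpecialLinearGroup (Fin 2) F) : Matrix (Fin 2) (Fin 2) F)) := by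
          noncomm_ring
      _ = 1 := by rw [h3, hBC, one_mul]

/-- The fixed subfield `E = {x ∈ F : x^q = x}` of the field involution `σ : x ↦ x^q`. -/
def fixedSubfield {F : Type} [Field F] (q : ℕ) (σ : F →+* F) (hσ : ∀ x, σ x = x ^ q) :
    Subfield F where
  carrier := {x | x ^ q = x}
  mul_mem' := by
    intro a b ha hb
    simp only [Set.mem_setOf_eq] at *
    rw [mul_pow, ha, hb]
  one_mem' := one_pow q
  add_mem' := by
    intro a b ha hb
    simp only [Set.mem_setOf_eq] at *
    rw [← hσ, map_add, hσ, hσ, ha, hb]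
  zero_mem' := by
    show (0 : F) ^ q = 0
    rw [← hσ, map_zero]
  neg_mem' := by
    intro a ha
    simp only [Set.mem_setOf_eq] at *
    rw [← hσ, map_neg, hσ, ha]
  inv_mem' := by
    intro a ha
    simp only [Set.mem_setOf_eq] at *
    rw [← hσ, map_inv₀, hσ, ha]

open Matrix in
/-- Let `q` be a prime power, `F` a finite field with `q²` elements, `σ : x ↦ x^q` the field
involution and `E = {x ∈ F : x^q = x}` its fixed subfield. Then `SU₂(F,σ)` is isomorphic
as an abstract group to `SL₂(E)`. -/
theorem stmt_1 (q : ℕ) (hq : IsPrimePow q) (F : Type) [Field F] [Fintype F]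
    (hF : Fintype.card F = q ^ 2) (σ : F →+* F) (hσ : ∀ x, σ x = x ^ q) :
    Nonempty ((SU₂ σ) ≃* SpecialLinearGroup (Fin 2) (fixedSubfield q σ hσ)) := by
  classical
  obtain ⟨e, he⟩ := exists_e q hq.two_le F hF
  obtain ⟨t, ht⟩ := exists_t q hq.two_le F hF
  have hq2 : ∀ x : F, x ^ q ^ 2 = x := fun x => by rw [← hF]; exact FiniteField.pow_card x
  have htq : (t ^ q) ^ q = t := by rw [← pow_mul, ← pow_two]; exact hq2 t
  set Q : Matrix (Fin 2) (Fin 2) F := !![1, t; e, e * t ^ q] with hQdef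
  set l : F := t - t ^ q with hldef
  set Λ : Matrix (Fin 2) (Fin 2) F := !![0, l; -l, 0] with hΛdef
  have hQ : (Q.map σ)ᵀ * Q = Λ := by
    rw [hQdef, hΛdef, hldef]
    ext i j
    fin_cases i <;> fin_cases j <;>
      simp [Matrix.mul_apply, Fin.sum_univ_two, Matrix.map_apply, hσ]
    · linear_combination he
    · linear_combination (t ^ q) * he
    · linear_combination t * he + e ^ (q + 1) * htq
    · linear_combination t ^ q * t * he + e ^ (q + 1) * t ^ q * htq
  have hene : e ≠ 0 := by
    intro h
    rw [h, zero_pow (by omega : q + 1 ≠ 0)] at he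
    exact one_ne_zero (by linear_combination he : (1 : F) = 0)
  have hlne : l ≠ 0 := sub_ne_zero.mpr (Ne.symm ht)
  have hdetQ : IsUnit Q.det := by
    have h1 : Q.det = -(e * l) := by
      rw [Matrix.det_fin_two]
      simp [hQdef, hldef]
      ring
    rw [h1]
    exact ((neg_ne_zero).mpr (mul_ne_zero hene hlne)).isUnit
  have hQi : Q * Q⁻¹ = 1 := Matrix.mul_nonsing_inv Q hdetQ
  have hQi' : Q⁻¹ * Q = 1 := Matrix.nonsing_inv_mul Q hdetQ
  have hσQ : (Q.map σ) * (Q⁻¹.map σ) = 1 := by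
    rw [← Matrix.map_mul, hQi, Matrix.map_one σ (map_zero σ) (map_one σ)]
  have hσQ' : (Q⁻¹.map σ) * (Q.map σ) = 1 := by
    rw [← Matrix.map_mul, hQi', Matrix.map_one σ (map_zero σ) (map_one σ)]
  set Λ' : Matrix (Fin 2) (Fin 2) F := !![0, -l⁻¹; l⁻¹, 0] with hΛ'def
  have hΛi : Λ * Λ' = 1 := by
    rw [hΛdef, hΛ'def]
    ext i j
    fin_cases i <;> fin_cases j <;>
      simp [Matrix.mul_apply, Fin.sum_univ_two, mul_inv_cancel₀ hlne]
  have hsymp : ∀ m : Matrix (Fin 2) (Fin 2) F, m.det = 1 → mᵀ * Λ * m = Λ := by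
    intro m hm
    have h := sympl' l m
    rw [hm, one_smul] at h
    rw [hΛdef]
    exact h
  have expand : ∀ m : Matrix (Fin 2) (Fin 2) F,
      ((Q * m * Q⁻¹).map σ)ᵀ * (Q * m * Q⁻¹) =
        (Q⁻¹.map σ)ᵀ * ((m.map σ)ᵀ * ((Q.map σ)ᵀ * Q) * m) * Q⁻¹ := by
    intro m
    rw [Matrix.map_mul, Matrix.map_mul, Matrix.transpose_mul, Matrix.transpose_mul]
    noncomm_ring
  have memA : ∀ m : Matrix (Fin 2) (Fin 2) F, m.det = 1 → m.map σ = m →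
      ((Q * m * Q⁻¹).map σ)ᵀ * (Q * m * Q⁻¹) = 1 := by
    intro m hdm hmσ
    rw [expand m, hQ, hmσ, hsymp m hdm, ← hQ]
    calc (Q⁻¹.map σ)ᵀ * ((Q.map σ)ᵀ * Q) * Q⁻¹
        = ((Q.map σ) * (Q⁻¹.map σ))ᵀ * (Q * Q⁻¹) := by
          rw [Matrix.transpose_mul]; noncomm_ring
      _ = 1 := by rw [hσQ, hQi, Matrix.transpose_one, one_mul]
  have memB : ∀ g g' : Matrix (Fin 2) (Fin 2) F, g * g' = 1 → g' * g = 1 → g.det = 1 →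
      (g.map σ)ᵀ * g = 1 → (Q⁻¹ * g * Q).map σ = Q⁻¹ * g * Q := by
    intro g g' hgg' hg'g hdg hg
    set m := Q⁻¹ * g * Q with hmdef
    set m' := Q⁻¹ * g' * Q with hm'def
    have hmm' : m * m' = 1 := by
      rw [hmdef, hm'def]
      calc Q⁻¹ * g * Q * (Q⁻¹ * g' * Q) = Q⁻¹ * (g * (Q * Q⁻¹) * g') * Q := by noncomm_ring
        _ = 1 := by rw [hQi, mul_one, hgg', mul_one, hQi']
    have hdm : m.det = 1 := by
      rw [hmdef, Matrix.det_mul, Matrix.det_mul, hdg, mul_one, ← Matrix.det_mul, hQi',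
        Matrix.det_one]
    have hgm : Q * m * Q⁻¹ = g := by
      rw [hmdef]
      calc Q * (Q⁻¹ * g * Q) * Q⁻¹ = (Q * Q⁻¹) * g * (Q * Q⁻¹) := by noncomm_ring
        _ = g := by rw [hQi, one_mul, mul_one]
    have key : (m.map σ)ᵀ * Λ * m = Λ := by
      have h1 : (Q⁻¹.map σ)ᵀ * ((m.map σ)ᵀ * Λ * m) * Q⁻¹ = 1 := by
        rw [← hQ, ← expand m, hgm, hg]
      calc (m.map σ)ᵀ * Λ * m
          = ((Q⁻¹.map σ) * (Q.map σ))ᵀ * ((m.map σ)ᵀ * Λ * m) * (Q⁻¹ * Q) := by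
            rw [hσQ', hQi', Matrix.transpose_one, one_mul, mul_one]
        _ = (Q.map σ)ᵀ * ((Q⁻¹.map σ)ᵀ * ((m.map σ)ᵀ * Λ * m) * Q⁻¹) * Q := by
            rw [Matrix.transpose_mul]; noncomm_ring
        _ = (Q.map σ)ᵀ * Q := by rw [h1, mul_one]
        _ = Λ := hQ
    have key2 : (m.map σ)ᵀ * (Λ * m) = mᵀ * (Λ * m) := by
      rw [← mul_assoc, key, ← mul_assoc, hsymp m hdm]
    have hinv2 : (Λ * m) * (m' * Λ') = 1 := by
      calc (Λ * m) * (m' * Λ') = Λ * (m * m') * Λ' := by noncomm_ring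
        _ = 1 := by rw [hmm', mul_one, hΛi]
    have h3 : (m.map σ)ᵀ = mᵀ := by
      calc (m.map σ)ᵀ = (m.map σ)ᵀ * ((Λ * m) * (m' * Λ')) := by rw [hinv2, mul_one]
        _ = ((m.map σ)ᵀ * (Λ * m)) * (m' * Λ') := by noncomm_ring
        _ = mᵀ * ((Λ * m) * (m' * Λ')) := by rw [key2]; noncomm_ring
        _ = mᵀ := by rw [hinv2, mul_one]
    have h4 := congrArg Matrix.transpose h3
    simpa using h4
  set EE := fixedSubfield q σ hσ with hEE
  have hmemEE : ∀ x : F, x ∈ EE ↔ x ^ q = x := fun x => Iff.rfl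
  set ι : Matrix (Fin 2) (Fin 2) EE → Matrix (Fin 2) (Fin 2) F :=
    fun k => k.map EE.subtype with hι
  have ιmul : ∀ a b, ι (a * b) = ι a * ι b := fun a b => Matrix.map_mul
  have ιinj : Function.Injective ι := by
    intro a b hab
    ext i j
    have h := congrFun (congrFun hab i) j
    exact h
  have ιdet : ∀ k : Matrix (Fin 2) (Fin 2) EE, (ι k).det = EE.subtype k.det := by
    intro k
    rw [RingHom.map_det]
    rfl
  have ιfix : ∀ k : Matrix (Fin 2) (Fin 2) EE, (ι k).map σ = ι k := by
    intro k
    ext i j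
    show σ ((k i j : F)) = (k i j : F)
    rw [hσ]
    exact (k i j).2
  -- mem facts for elements of SU₂
  have hSU : ∀ h : SpecialLinearGroup (Fin 2) F, h ∈ SU₂ σ ↔
      (((h : Matrix (Fin 2) (Fin 2) F)).map σ)ᵀ * (h : Matrix (Fin 2) (Fin 2) F) = 1 :=
    fun h => Iff.rfl
  -- the matrix associated to g ∈ SU₂
  have hmem : ∀ g : SU₂ σ, ∀ i j,
      ((Q⁻¹ * ((g : SpecialLinearGroup (Fin 2) F) : Matrix (Fin 2) (Fin 2) F) * Q) i j) ∈ EE := by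
    intro g i j
    have hmσ := memB ((g : SpecialLinearGroup (Fin 2) F) : Matrix (Fin 2) (Fin 2) F)
      (((g : SpecialLinearGroup (Fin 2) F)⁻¹ : SpecialLinearGroup (Fin 2) F) :
        Matrix (Fin 2) (Fin 2) F)
      (by rw [← Matrix.SpecialLinearGroup.coe_mul, mul_inv_cancel, Matrix.SpecialLinearGroup.coe_one])
      (by rw [← Matrix.SpecialLinearGroup.coe_mul, inv_mul_cancel, Matrix.SpecialLinearGroup.coe_one])
      (g : SpecialLinearGroup (Fin 2) F).2
      ((hSU _).mp g.2)
    rw [hmemEE, ← hσ]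
    exact congrFun (congrFun hmσ i) j
  have hdetm : ∀ g : SU₂ σ,
      (Q⁻¹ * ((g : SpecialLinearGroup (Fin 2) F) : Matrix (Fin 2) (Fin 2) F) * Q).det = 1 := by
    intro g
    rw [Matrix.det_mul, Matrix.det_mul, (g : SpecialLinearGroup (Fin 2) F).2, mul_one,
      ← Matrix.det_mul, hQi', Matrix.det_one]
  -- forward map on matrices over EE
  set Am : (SU₂ σ) → Matrix (Fin 2) (Fin 2) EE := fun g => Matrix.of fun i j =>
    (⟨(Q⁻¹ * ((g : SpecialLinearGroup (Fin 2) F) : Matrix (Fin 2) (Fin 2) F) * Q) i j,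
      hmem g i j⟩ : EE) with hAm
  have hιAm : ∀ g : SU₂ σ, ι (Am g) =
      Q⁻¹ * ((g : SpecialLinearGroup (Fin 2) F) : Matrix (Fin 2) (Fin 2) F) * Q := by
    intro g; ext i j; rfl
  have hdetAm : ∀ g : SU₂ σ, (Am g).det = 1 := by
    intro g
    have h1 : EE.subtype (Am g).det = EE.subtype 1 := by
      rw [← ιdet, hιAm, hdetm g, _root_.map_one]
    exact Subtype.ext h1
  set A : (SU₂ σ) → SpecialLinearGroup (Fin 2) EE := fun g => ⟨Am g, hdetAm g⟩ with hA
  -- backward map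
  have hdetB : ∀ k : SpecialLinearGroup (Fin 2) EE,
      (Q * ι (k : Matrix (Fin 2) (Fin 2) EE) * Q⁻¹).det = 1 := by
    intro k
    rw [Matrix.det_mul, Matrix.det_mul, ιdet, k.2, _root_.map_one, mul_one, ← Matrix.det_mul, hQi,
      Matrix.det_one]
  set B : SpecialLinearGroup (Fin 2) EE → (SU₂ σ) := fun k =>
    ⟨⟨Q * ι (k : Matrix (Fin 2) (Fin 2) EE) * Q⁻¹, hdetB k⟩, by
      show ((Q * ι (k : Matrix (Fin 2) (Fin 2) EE) * Q⁻¹).map σ)ᵀ * (Q * ι (k : Matrix (Fin 2) (Fin 2) EE) * Q⁻¹) = 1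
      exact memA (ι (k : Matrix (Fin 2) (Fin 2) EE))
        (by rw [ιdet, k.2, _root_.map_one]) (ιfix _)⟩ with hB
  refine ⟨{ toFun := A, invFun := B, left_inv := ?_, right_inv := ?_, map_mul' := ?_ }⟩
  · intro g
    apply Subtype.ext
    apply Subtype.ext
    show Q * ι (Am g) * Q⁻¹ = _
    rw [hιAm]
    calc Q * (Q⁻¹ * ((g : SpecialLinearGroup (Fin 2) F) : Matrix (Fin 2) (Fin 2) F) * Q) * Q⁻¹
        = (Q * Q⁻¹) * ((g : SpecialLinearGroup (Fin 2) F) : Matrix (Fin 2) (Fin 2) F) *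
            (Q * Q⁻¹) := by noncomm_ring
      _ = _ := by rw [hQi, one_mul, mul_one]
  · intro k
    apply Subtype.ext
    apply ιinj
    show ι (Am (B k)) = ι (k : Matrix (Fin 2) (Fin 2) EE)
    rw [hιAm]
    show Q⁻¹ * (Q * ι (k : Matrix (Fin 2) (Fin 2) EE) * Q⁻¹) * Q = _
    calc Q⁻¹ * (Q * ι (k : Matrix (Fin 2) (Fin 2) EE) * Q⁻¹) * Q
        = (Q⁻¹ * Q) * ι (k : Matrix (Fin 2) (Fin 2) EE) * (Q⁻¹ * Q) := by noncomm_ring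
      _ = _ := by rw [hQi', one_mul, mul_one]
  · intro g h
    apply Subtype.ext
    apply ιinj
    show ι (Am (g * h)) = ι ((A g * A h : SpecialLinearGroup (Fin 2) EE) :
      Matrix (Fin 2) (Fin 2) EE)
    rw [hιAm]
    have hcoe : (((g * h : SU₂ σ) : SpecialLinearGroup (Fin 2) F) :
        Matrix (Fin 2) (Fin 2) F) =
        ((g : SpecialLinearGroup (Fin 2) F) : Matrix (Fin 2) (Fin 2) F) *
        ((h : SpecialLinearGroup (Fin 2) F) : Matrix (Fin 2) (Fin 2) F) := rfl
    rw [hcoe]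
    have h2 : ι ((A g * A h : SpecialLinearGroup (Fin 2) EE) : Matrix (Fin 2) (Fin 2) EE) =
        ι (Am g) * ι (Am h) := by
      exact ιmul _ _
    rw [h2, hιAm, hιAm]
    have h4 : (Q⁻¹ * ((g : SpecialLinearGroup (Fin 2) F) : Matrix (Fin 2) (Fin 2) F) * Q) *
        (Q⁻¹ * ((h : SpecialLinearGroup (Fin 2) F) : Matrix (Fin 2) (Fin 2) F) * Q) =
        Q⁻¹ * (((g : SpecialLinearGroup (Fin 2) F) : Matrix (Fin 2) (Fin 2) F) * ((Q * Q⁻¹) *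
          ((h : SpecialLinearGroup (Fin 2) F) : Matrix (Fin 2) (Fin 2) F))) * Q := by
      noncomm_ring
    rw [h4, hQi, one_mul]
end

section
/- Let q and r be prime powers, let F be a finite field with q² elements with field involution σ : x ↦ x^q, and let F' be a finite field with r² elements with field involution σ' : x ↦ x^r. If the special unitary groups SU₂(F,σ) = {g ∈ SL₂(F) : σ(g)ᵀ · g = 1} and SU₂(F',σ') = {g ∈ SL₂(F') : σ'(g)ᵀ · g = 1} are isomorphic as abstract groups, then q = r. -/
section AuxSU2

open Matrix Polynomial

variable {q : ℕ} {F : Type} [Field F] [Fintype F]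

lemma SU2aux_fac (hq2 : 2 ≤ q) : q ^ 2 - 1 = (q + 1) * (q - 1) := by
  zify [show 1 ≤ q ^ 2 by nlinarith, show 1 ≤ q by omega]; ring

lemma SU2aux_exists_primroot (hq2 : 2 ≤ q) (hF : Fintype.card F = q ^ 2) :
    ∃ ζ : F, IsPrimitiveRoot ζ (q + 1) := by
  classical
  obtain ⟨g, hg⟩ := IsCyclic.exists_generator (α := Fˣ)
  have horder : orderOf g = q ^ 2 - 1 := by
    rw [orderOf_eq_card_of_forall_mem_zpowers hg, Nat.card_eq_fintype_card,
      Fintype.card_units, hF]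
  have hdvd : (q + 1) ∣ q ^ 2 - 1 := ⟨q - 1, SU2aux_fac hq2⟩
  have h0 : orderOf g ≠ 0 := by
    rw [horder]; have : 4 ≤ q ^ 2 := by nlinarith
    omega
  have h1 : orderOf (g ^ (orderOf g / (q + 1))) = q + 1 :=
    orderOf_pow_orderOf_div h0 (horder ▸ hdvd)
  refine ⟨((g ^ (orderOf g / (q + 1)) : Fˣ) : F), ?_⟩
  have h2 := IsPrimitiveRoot.orderOf ((g ^ (orderOf g / (q + 1)) : Fˣ) : F)
  rwa [orderOf_units, h1] at h2

lemma SU2aux_card_pow_eq_one (hq2 : 2 ≤ q) (hF : Fintype.card F = q ^ 2) :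
    Nat.card {x : F // x ^ (q + 1) = 1} = q + 1 := by
  classical
  obtain ⟨ζ, hζ⟩ := SU2aux_exists_primroot hq2 hF
  rw [Nat.card_eq_fintype_card,
    Fintype.card_congr (Equiv.subtypeEquivRight
      (q := fun x => x ∈ nthRootsFinset (q + 1) (1 : F))
      (fun x => (mem_nthRootsFinset (by omega) (1 : F)).symm)),
    Fintype.card_coe, hζ.card_nthRootsFinset]

lemma SU2aux_exists_pow_eq (hq2 : 2 ≤ q) (hF : Fintype.card F = q ^ 2) {t : F}
    (ht : t ≠ 0) (htq : t ^ q = t) : ∃ x : F, x ^ (q + 1) = t := by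
  classical
  obtain ⟨g, hg⟩ := IsCyclic.exists_generator (α := Fˣ)
  have horder : orderOf g = q ^ 2 - 1 := by
    rw [orderOf_eq_card_of_forall_mem_zpowers hg, Nat.card_eq_fintype_card,
      Fintype.card_units, hF]
  obtain ⟨k, hk'⟩ := mem_powers_iff_mem_zpowers.mpr (hg (Units.mk0 t ht))
  have hk : g ^ k = Units.mk0 t ht := hk'
  have ht1 : t ^ (q - 1) = 1 := by
    have h : t ^ (q - 1) * t = 1 * t := by
      rw [one_mul, ← pow_succ, show q - 1 + 1 = q by omega, htq]
    exact mul_right_cancel₀ ht h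
  have hu1 : g ^ (k * (q - 1)) = 1 := by
    rw [pow_mul, hk]
    ext
    rw [Units.val_pow_eq_pow_val, Units.val_mk0, ht1, Units.val_one]
  have hdvd : (q + 1) * (q - 1) ∣ k * (q - 1) := by
    rw [← SU2aux_fac hq2, ← horder]
    exact orderOf_dvd_of_pow_eq_one hu1
  have hq1 : (q + 1) ∣ k :=
    (Nat.mul_dvd_mul_iff_right (show 0 < q - 1 by omega)).mp hdvd
  obtain ⟨m, rfl⟩ := hq1
  clear hk'
  refine ⟨((g ^ m : Fˣ) : F), ?_⟩
  rw [← Units.val_pow_eq_pow_val, ← pow_mul, mul_comm m, hk, Units.val_mk0]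

lemma SU2aux_card_fiber (hq2 : 2 ≤ q) (hF : Fintype.card F = q ^ 2) {t : F}
    (ht : t ≠ 0) (htq : t ^ q = t) :
    Nat.card {x : F // x ^ (q + 1) = t} = q + 1 := by
  obtain ⟨x₀, hx₀⟩ := SU2aux_exists_pow_eq hq2 hF ht htq
  have hx0 : x₀ ≠ 0 := fun h => ht (by rw [← hx₀, h, zero_pow (by omega : q + 1 ≠ 0)])
  conv_rhs => rw [← SU2aux_card_pow_eq_one hq2 hF]
  apply Nat.card_congr
  refine ⟨fun x => ⟨x.1 * x₀⁻¹, ?_⟩, fun u => ⟨u.1 * x₀, ?_⟩, ?_, ?_⟩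
  · rw [mul_pow, x.2, inv_pow, ← hx₀, mul_inv_cancel₀ (pow_ne_zero _ hx0)]
  · rw [mul_pow, u.2, one_mul, hx₀]
  · intro x; ext; field_simp
  · intro u; ext; field_simp

lemma SU2aux_card_fiber_zero (hq2 : 2 ≤ q) :
    Nat.card {x : F // x ^ (q + 1) = (0 : F)} = 1 := by
  classical
  rw [Nat.card_eq_fintype_card,
    Fintype.card_congr (Equiv.subtypeEquivRight
      (q := fun x : F => x = 0)
      (fun x => pow_eq_zero_iff (by omega : q + 1 ≠ 0))),
    Fintype.card_subtype_eq]

lemma SU2aux_pow_q (hF : Fintype.card F = q ^ 2) (a : F) :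
    (a ^ q) ^ (q + 1) = a ^ (q + 1) := by
  have hcard : a ^ (q ^ 2) = a := by rw [← hF]; exact FiniteField.pow_card a
  calc (a ^ q) ^ (q + 1) = a ^ (q ^ 2) * a ^ q := by rw [← pow_mul, ← pow_add]; ring_nf
    _ = a ^ (q + 1) := by rw [hcard, ← pow_succ']

lemma SU2aux_card_pairs (hq2 : 2 ≤ q) (hF : Fintype.card F = q ^ 2)
    (σ : F →+* F) (hσ : ∀ x, σ x = x ^ q) :
    Nat.card {p : F × F // p.1 * σ p.1 + p.2 * σ p.2 = 1} = q ^ 3 - q := by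
  classical
  have hcond : ∀ p : F × F,
      (p.1 * σ p.1 + p.2 * σ p.2 = 1) ↔ p.2 ^ (q + 1) = 1 - p.1 ^ (q + 1) := by
    intro p
    rw [hσ, hσ, ← pow_succ', ← pow_succ']
    constructor <;> intro h <;> linear_combination h
  rw [Nat.card_congr (Equiv.subtypeEquivRight hcond)]
  rw [Nat.card_congr (Equiv.subtypeProdEquivSigmaSubtype
    (fun a b : F => b ^ (q + 1) = 1 - a ^ (q + 1)))]
  have key : ∀ a : F, Nat.card {b : F // b ^ (q + 1) = 1 - a ^ (q + 1)} =
      if a ^ (q + 1) = 1 then 1 else q + 1 := by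
    intro a
    by_cases h : a ^ (q + 1) = 1
    · rw [if_pos h, h, sub_self]; exact SU2aux_card_fiber_zero hq2
    · rw [if_neg h]
      have ht : (1 : F) - a ^ (q + 1) ≠ 0 := sub_ne_zero.mpr (Ne.symm h)
      have htq : ((1 : F) - a ^ (q + 1)) ^ q = 1 - a ^ (q + 1) := by
        have h1 : σ (1 - a ^ (q + 1)) = (1 - a ^ (q + 1)) ^ q := hσ _
        rw [map_sub, _root_.map_one, map_pow, hσ, SU2aux_pow_q hF] at h1
        exact h1.symm
      exact SU2aux_card_fiber hq2 hF ht htq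
  rw [Nat.card_eq_fintype_card, Fintype.card_sigma]
  simp_rw [← Nat.card_eq_fintype_card, key]
  rw [Finset.sum_ite, Finset.sum_const, Finset.sum_const, smul_eq_mul, smul_eq_mul]
  have hfil : (Finset.univ.filter (fun a : F => a ^ (q + 1) = 1)).card = q + 1 := by
    rw [← Fintype.card_subtype, ← Nat.card_eq_fintype_card]
    exact SU2aux_card_pow_eq_one hq2 hF
  have hfil2 : (Finset.univ.filter (fun a : F => ¬ a ^ (q + 1) = 1)).card
      = q ^ 2 - (q + 1) := by
    rw [Finset.filter_not, Finset.card_sdiff_of_subset (Finset.filter_subset _ _), hfil,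
      Finset.card_univ, hF]
  rw [hfil, hfil2]
  have h1 : q + 1 ≤ q ^ 2 := by nlinarith
  have h2 : q ≤ q ^ 3 := Nat.le_self_pow (by norm_num) q
  zify [h1, h2]
  ring

lemma SU2aux_card_SU₂ (hq2 : 2 ≤ q) (hF : Fintype.card F = q ^ 2)
    (σ : F →+* F) (hσ : ∀ x, σ x = x ^ q) :
    Nat.card (SU₂ σ) = q ^ 3 - q := by
  have hσσ : ∀ x : F, σ (σ x) = x := by
    intro x
    rw [hσ, hσ, ← pow_mul, show q * q = q ^ 2 by ring, ← hF]
    exact FiniteField.pow_card x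
  rw [← SU2aux_card_pairs hq2 hF σ hσ]
  apply Nat.card_congr
  refine ⟨fun g => ⟨(((g : SpecialLinearGroup (Fin 2) F) : Matrix (Fin 2) (Fin 2) F) 0 0,
      ((g : SpecialLinearGroup (Fin 2) F) : Matrix (Fin 2) (Fin 2) F) 1 0), ?_⟩,
    fun p => ⟨⟨!![p.1.1, -σ p.1.2; p.1.2, σ p.1.1], ?_⟩, ?_⟩, ?_, ?_⟩
  · have hg : ((((g : SpecialLinearGroup (Fin 2) F) : Matrix (Fin 2) (Fin 2) F).map σ)ᵀ *
        ((g : SpecialLinearGroup (Fin 2) F) : Matrix (Fin 2) (Fin 2) F)) = 1 := g.2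
    have h00 := congrFun (congrFun hg 0) 0
    simp [Matrix.mul_apply, Fin.sum_univ_two, Matrix.one_apply] at h00
    linear_combination h00
  · rw [Matrix.det_fin_two_of]
    linear_combination p.2
  · obtain ⟨⟨a, c⟩, hp'⟩ := p
    have hp : a * σ a + c * σ c = 1 := hp'
    show ((!![a, -σ c; c, σ a]).map σ)ᵀ * !![a, -σ c; c, σ a] = 1
    ext i j
    fin_cases i <;> fin_cases j <;>
      simp [Matrix.mul_apply, Fin.sum_univ_two, Matrix.one_apply, hσσ, map_neg] <;>
      first
        | ring1
        | linear_combination hp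
  · intro g
    have hg : ((((g : SpecialLinearGroup (Fin 2) F) : Matrix (Fin 2) (Fin 2) F).map σ)ᵀ *
        ((g : SpecialLinearGroup (Fin 2) F) : Matrix (Fin 2) (Fin 2) F)) = 1 := g.2
    set M : Matrix (Fin 2) (Fin 2) F :=
      ((g : SpecialLinearGroup (Fin 2) F) : Matrix (Fin 2) (Fin 2) F) with hM
    have hd : M.det = 1 := (g : SpecialLinearGroup (Fin 2) F).2
    have hadj : (M.map σ)ᵀ = M.adjugate := by
      have h1 : (M.map σ)ᵀ = M⁻¹ := (Matrix.inv_eq_left_inv hg).symm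
      rw [h1, Matrix.inv_def, hd]
      simp
    have hb : σ (M 1 0) = -(M 0 1) := by
      have h := congrFun (congrFun hadj 0) 1
      rw [Matrix.adjugate_fin_two] at h
      simpa using h
    have hd11 : M 1 1 = σ (M 0 0) := by
      have h := congrFun (congrFun hadj 1) 1
      rw [Matrix.adjugate_fin_two] at h
      simp at h
      have h2 := congrArg σ h
      rwa [hσσ] at h2
    apply Subtype.ext
    apply Subtype.ext
    show !![M 0 0, -σ (M 1 0); M 1 0, σ (M 0 0)] = M
    ext i j
    fin_cases i <;> fin_cases j <;> simp [hb, hd11]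
  · intro p
    ext <;> simp

end AuxSU2
open Matrix in
/-- If the special unitary groups `SU₂(F,σ)` and `SU₂(F',σ')`, over finite fields with `q²`
and `r²` elements respectively, are isomorphic as abstract groups, then `q = r`. -/
theorem stmt_6 (q r : ℕ) (hq : IsPrimePow q) (hr : IsPrimePow r)
    (F : Type) [Field F] [Fintype F] (hF : Fintype.card F = q ^ 2)
    (F' : Type) [Field F'] [Fintype F'] (hF' : Fintype.card F' = r ^ 2)
    (σ : F →+* F) (hσ : ∀ x, σ x = x ^ q)
    (σ' : F' →+* F') (hσ' : ∀ x, σ' x = x ^ r)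
    (h : Nonempty ((SU₂ σ) ≃* (SU₂ σ'))) :
    q = r := by
  obtain ⟨e⟩ := h
  have hq2 := hq.two_le
  have hr2 := hr.two_le
  have h1 : Nat.card (SU₂ σ) = q ^ 3 - q := SU2aux_card_SU₂ hq2 hF σ hσ
  have h2 : Nat.card (SU₂ σ') = r ^ 3 - r := SU2aux_card_SU₂ hr2 hF' σ' hσ'
  have hc : q ^ 3 - q = r ^ 3 - r := by rw [← h1, ← h2]; exact Nat.card_congr e.toEquiv
  have hq3 : q ≤ q ^ 3 := Nat.le_self_pow (by norm_num) q
  have hr3 : r ≤ r ^ 3 := Nat.le_self_pow (by norm_num) r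
  have heq : (q : ℤ) ^ 3 + r = (r : ℤ) ^ 3 + q := by
    have h4 : q ^ 3 + r = r ^ 3 + q := by omega
    exact_mod_cast h4
  have key : ((q : ℤ) - r) * ((q : ℤ) ^ 2 + q * r + r ^ 2 - 1) = 0 := by
    linear_combination heq
  rcases mul_eq_zero.mp key with h0 | h0
  · have : (q : ℤ) = r := by linarith
    exact_mod_cast this
  · exfalso
    have hq2' : (2 : ℤ) ≤ q := by exact_mod_cast hq2
    have hr2' : (2 : ℤ) ≤ r := by exact_mod_cast hr2
    nlinarith
end

section
/- Let q be a prime power and let F be a finite field with q² elements, with field involution σ : x ↦ x^q, and let h(v) = v₁·σ(v₁) + v₂·σ(v₂) be the standard hermitian norm on F². Then the number of vectors v ∈ F² with h(v) = 1 equals q³ − q, and the number of nonzero vectors v ∈ F² with h(v) = 0 (nonzero isotropic vectors) equals (q+1)(q²−1). -/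
open Finset Polynomial

section Aux

/-- Key counting lemma: in a field with `q^2` elements, for `c ≠ 0` with `c^q = c`,
the equation `x^(q+1) = c` has exactly `q+1` solutions. -/
lemma aux_count (q : ℕ) (hq2 : 2 ≤ q) (F : Type) [Field F] [Fintype F] [DecidableEq F]
    (hF : Fintype.card F = q ^ 2) (c : F) (hc0 : c ≠ 0) (hcq : c ^ q = c) :
    (Finset.univ.filter (fun x : F => x ^ (q + 1) = c)).card = q + 1 := by
  have hqq : (q + 1) * (q - 1) = q ^ 2 - 1 := by
    obtain ⟨m, rfl⟩ : ∃ m, q = m + 2 := ⟨q - 2, by omega⟩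
    simp only [show m + 2 - 1 = m + 1 from rfl]
    exact (Nat.sub_eq_of_eq_add (show (m + 2) ^ 2 = (m + 2 + 1) * (m + 1) + 1 by ring)).symm
  set C : Finset F := Finset.univ.filter (fun d : F => d ≠ 0 ∧ d ^ (q - 1) = 1) with hC
  have hCle : C.card ≤ q - 1 := by
    have hsub : C ⊆ (nthRoots (q - 1) (1 : F)).toFinset := by
      intro d hd
      rw [hC, mem_filter] at hd
      rw [Multiset.mem_toFinset, mem_nthRoots (by omega)]
      exact hd.2.2
    calc C.card ≤ _ := Finset.card_le_card hsub
      _ ≤ Multiset.card (nthRoots (q - 1) (1 : F)) := (nthRoots (q-1) (1:F)).toFinset_card_le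
      _ ≤ q - 1 := Polynomial.card_nthRoots _ _
  have hsle : ∀ d : F, (Finset.univ.filter (fun x : F => x ^ (q + 1) = d)).card ≤ q + 1 := by
    intro d
    have hsub : (Finset.univ.filter (fun x : F => x ^ (q + 1) = d)) ⊆
        (nthRoots (q + 1) d).toFinset := by
      intro x hx
      rw [mem_filter] at hx
      rw [Multiset.mem_toFinset, mem_nthRoots (by omega)]
      exact hx.2
    calc _ ≤ _ := Finset.card_le_card hsub
      _ ≤ Multiset.card (nthRoots (q + 1) d) := (nthRoots (q+1) d).toFinset_card_le
      _ ≤ q + 1 := Polynomial.card_nthRoots _ _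
  have hmem : ∀ x : F, x ≠ 0 → x ^ (q + 1) ∈ C := by
    intro x hx
    rw [hC, mem_filter]
    refine ⟨mem_univ _, pow_ne_zero _ hx, ?_⟩
    rw [← pow_mul, hqq, ← hF]
    exact FiniteField.pow_card_sub_one_eq_one x hx
  have hfib : ∀ d : F, d ≠ 0 →
      ((Finset.univ.filter (fun x : F => x ≠ 0)).filter (fun x => x ^ (q + 1) = d))
        = Finset.univ.filter (fun x : F => x ^ (q + 1) = d) := by
    intro d hd
    ext x
    simp only [mem_filter, mem_univ, true_and]
    refine ⟨fun h => h.2, fun h => ⟨fun hx0 => hd ?_, h⟩⟩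
    rw [← h, hx0, zero_pow (by omega)]
  have hsum : ∑ d ∈ C, (Finset.univ.filter (fun x : F => x ^ (q + 1) = d)).card = q ^ 2 - 1 := by
    have hU : (Finset.univ.filter (fun x : F => x ≠ 0)).card = q ^ 2 - 1 := by
      rw [Finset.filter_ne', Finset.card_erase_of_mem (mem_univ 0), Finset.card_univ, hF]
    rw [← hU]
    rw [Finset.card_eq_sum_card_fiberwise (f := fun x : F => x ^ (q + 1)) (t := C)
      (fun x hx => hmem x (by simpa using hx))]
    refine Finset.sum_congr rfl (fun d hd => ?_)
    rw [hC, mem_filter] at hd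
    rw [hfib d hd.2.1]
  -- pigeonhole
  have key : ∀ d ∈ C, (Finset.univ.filter (fun x : F => x ^ (q + 1) = d)).card = q + 1 := by
    by_contra hcon
    push_neg at hcon
    obtain ⟨d, hd, hne⟩ := hcon
    have hdle : (Finset.univ.filter (fun x : F => x ^ (q + 1) = d)).card ≤ q :=
      by have := hsle d; omega
    have hsplit := Finset.add_sum_erase C
      (fun d => (Finset.univ.filter (fun x : F => x ^ (q + 1) = d)).card) hd
    have herase : ∑ e ∈ C.erase d, (Finset.univ.filter (fun x : F => x ^ (q + 1) = e)).card
        ≤ (q - 2) * (q + 1) := by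
      calc _ ≤ (C.erase d).card • (q + 1) :=
            Finset.sum_le_card_nsmul _ _ _ (fun e _ => hsle e)
        _ = (C.card - 1) * (q + 1) := by rw [Finset.card_erase_of_mem hd, smul_eq_mul]
        _ ≤ (q - 2) * (q + 1) := Nat.mul_le_mul_right _ (by omega)
    have hlt : q ^ 2 - 1 ≤ q + (q - 2) * (q + 1) := by
      calc q ^ 2 - 1 = _ := hsum.symm
        _ = _ := hsplit.symm
        _ ≤ q + (q - 2) * (q + 1) := Nat.add_le_add hdle herase
    obtain ⟨m, rfl⟩ : ∃ m, q = m + 2 := ⟨q - 2, by omega⟩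
    simp only [Nat.add_sub_cancel] at hlt
    have h1 : (m + 2) ^ 2 = (m + 2) + m * (m + 2 + 1) + 2 := by ring
    omega
  exact key c (by rw [hC, mem_filter]; exact ⟨mem_univ _, hc0, by
    have : c ^ q = c ^ (q - 1) * c := by rw [← pow_succ]; congr 1; omega
    rw [this] at hcq
    exact mul_right_cancel₀ hc0 (by rw [hcq, one_mul])⟩)

lemma aux_card (F : Type) [Fintype F] [DecidableEq F] (P : F → F → Prop)
    [∀ a b, Decidable (P a b)] :
    Nat.card {v : Fin 2 → F // P (v 0) (v 1)} =
      ∑ a : F, (Finset.univ.filter (fun b => P a b)).card := by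
  rw [Nat.card_eq_fintype_card]
  rw [Fintype.card_congr ((finTwoArrowEquiv F).subtypeEquiv (q := fun p : F × F => P p.1 p.2) (fun v => by
    simp [finTwoArrowEquiv]))]
  rw [Fintype.card_congr (Equiv.subtypeProdEquivSigmaSubtype P)]
  rw [Fintype.card_sigma]
  exact Finset.sum_congr rfl (fun a _ => Fintype.card_subtype _)

end Aux

/-- For the standard hermitian norm `h(v) = v₁·σ(v₁) + v₂·σ(v₂)` on `F²`, where `F` is a
finite field with `q²` elements and `σ : x ↦ x^q`, the number of vectors of norm `1` is
`q³ − q`, and the number of nonzero isotropic vectors is `(q+1)(q²−1)`. -/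
theorem stmt_9 (q : ℕ) (hq : IsPrimePow q) (F : Type) [Field F] [Fintype F]
    (hF : Fintype.card F = q ^ 2) :
    Nat.card {v : Fin 2 → F // v 0 * (v 0) ^ q + v 1 * (v 1) ^ q = 1} = q ^ 3 - q ∧
    Nat.card {v : Fin 2 → F // v ≠ 0 ∧ v 0 * (v 0) ^ q + v 1 * (v 1) ^ q = 0} =
      (q + 1) * (q ^ 2 - 1) := by
  classical
  have hq2 : 2 ≤ q := hq.two_le
  obtain ⟨p, k, hp, hk, hpk⟩ := hq
  have hp' : p.Prime := Nat.prime_iff.mpr hp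
  -- the characteristic of F is p
  have hcharp : CharP F p := by
    obtain ⟨n, hpr, hcard⟩ := FiniteField.card F (ringChar F)
    have hdvd : p ∣ ringChar F ^ (n : ℕ) := by
      rw [← hcard, hF, ← hpk]
      exact dvd_pow (dvd_pow_self p (by omega)) (by positivity)
    have : p = ringChar F :=
      ((Nat.prime_dvd_prime_iff_eq hp' hpr).mp (hp'.dvd_of_dvd_pow hdvd))
    rw [this]
    exact ringChar.charP F
  haveI : Fact p.Prime := ⟨hp'⟩
  -- Frobenius facts
  have hsubq : ∀ x y : F, (x - y) ^ q = x ^ q - y ^ q := by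
    intro x y
    rw [← hpk]
    exact sub_pow_char_pow (p := p) x y k
  have hnegq : ∀ x : F, (-x) ^ q = -(x ^ q) := by
    intro x
    have := hsubq 0 x
    simpa [zero_pow (show q ≠ 0 by omega), zero_sub] using this
  have hxq2 : ∀ x : F, x ^ (q ^ 2) = x := by
    intro x
    rw [← hF]
    exact FiniteField.pow_card x
  have hpow : ∀ x : F, (x ^ (q + 1)) ^ q = x ^ (q + 1) := by
    intro x
    rw [← pow_mul, show (q + 1) * q = q ^ 2 + q by ring, pow_add, hxq2,
      ← pow_succ']
  -- counting solutions of x^(q+1) = c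
  have s0 : (Finset.univ.filter (fun x : F => x ^ (q + 1) = 0)).card = 1 := by
    have : (Finset.univ.filter (fun x : F => x ^ (q + 1) = (0 : F))) = {0} := by
      ext x
      simp [pow_eq_zero_iff (show q + 1 ≠ 0 by omega)]
    rw [this, Finset.card_singleton]
  have sC : ∀ c : F, c ≠ 0 → c ^ q = c →
      (Finset.univ.filter (fun x : F => x ^ (q + 1) = c)).card = q + 1 :=
    fun c h1 h2 => aux_count q hq2 F hF c h1 h2
  have hU : (Finset.univ.filter (fun a : F => ¬ a = 0)).card = q ^ 2 - 1 := by
    rw [Finset.filter_ne', Finset.card_erase_of_mem (mem_univ 0), Finset.card_univ, hF]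
  constructor
  · -- norm one count
    rw [aux_card F (fun a b => a * a ^ q + b * b ^ q = 1)]
    have hterm : ∀ a : F, (Finset.univ.filter (fun b : F => a * a ^ q + b * b ^ q = 1)).card
        = if a ^ (q + 1) = 1 then 1 else q + 1 := by
      intro a
      have hfe : (Finset.univ.filter (fun b : F => a * a ^ q + b * b ^ q = 1))
          = Finset.univ.filter (fun b : F => b ^ (q + 1) = 1 - a ^ (q + 1)) := by
        ext b
        simp only [Finset.mem_filter, Finset.mem_univ, true_and, ← pow_succ']
        exact eq_sub_iff_add_eq'.symm
      rw [hfe]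
      split_ifs with h
      · rw [h, sub_self, s0]
      · refine sC _ (sub_ne_zero.mpr (Ne.symm h)) ?_
        rw [hsubq, one_pow, hpow]
    calc ∑ a : F, (Finset.univ.filter (fun b : F => a * a ^ q + b * b ^ q = 1)).card
        = ∑ a : F, (if a ^ (q + 1) = 1 then 1 else q + 1) :=
          Finset.sum_congr rfl (fun a _ => hterm a)
      _ = (Finset.univ.filter (fun a : F => a ^ (q + 1) = 1)).card * 1 +
          (Finset.univ.filter (fun a : F => ¬ a ^ (q + 1) = 1)).card * (q + 1) := by
          rw [Finset.sum_ite, Finset.sum_const, Finset.sum_const, smul_eq_mul, smul_eq_mul]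
      _ = q ^ 3 - q := by
          have h1 : (Finset.univ.filter (fun a : F => a ^ (q + 1) = 1)).card = q + 1 :=
            sC 1 one_ne_zero (one_pow q)
          have h2 : (Finset.univ.filter (fun a : F => a ^ (q + 1) = 1)).card +
              (Finset.univ.filter (fun a : F => ¬ a ^ (q + 1) = 1)).card = q ^ 2 := by
            rw [Finset.card_filter_add_card_filter_not, Finset.card_univ, hF]
          rw [h1] at h2 ⊢
          have h3 : (Finset.univ.filter (fun a : F => ¬ a ^ (q + 1) = 1)).card
              = q ^ 2 - (q + 1) := by omega
          rw [h3]
          have h4 : q + 1 ≤ q ^ 2 := by nlinarith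
          have h5 : q ≤ q ^ 3 := by nlinarith
          zify [h4, h5]
          ring
  · -- isotropic count
    have hiff : ∀ v : Fin 2 → F,
        (v ≠ 0 ∧ v 0 * (v 0) ^ q + v 1 * (v 1) ^ q = 0) ↔
        (¬ v 0 = 0 ∧ v 0 * (v 0) ^ q + v 1 * (v 1) ^ q = 0) := by
      intro v
      constructor
      · rintro ⟨hv, hh⟩
        refine ⟨fun h0 => hv ?_, hh⟩
        rw [h0] at hh
        simp only [zero_mul, zero_add] at hh
        have h1 : v 1 = 0 := by
          rcases mul_eq_zero.mp hh with h | h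
          · exact h
          · exact pow_eq_zero_iff (show q ≠ 0 by omega) |>.mp h
        funext i
        fin_cases i <;> simp [h0, h1]
      · rintro ⟨h0, hh⟩
        exact ⟨fun hv => h0 (by rw [hv]; rfl), hh⟩
    rw [Nat.card_congr (Equiv.subtypeEquivRight hiff)]
    rw [aux_card F (fun a b => ¬ a = 0 ∧ a * a ^ q + b * b ^ q = 0)]
    have hterm : ∀ a : F,
        (Finset.univ.filter (fun b : F => ¬ a = 0 ∧ a * a ^ q + b * b ^ q = 0)).card
        = if a = 0 then 0 else q + 1 := by
      intro a
      split_ifs with h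
      · simp [h]
      · have hfe : (Finset.univ.filter (fun b : F => ¬ a = 0 ∧ a * a ^ q + b * b ^ q = 0))
            = Finset.univ.filter (fun b : F => b ^ (q + 1) = -(a ^ (q + 1))) := by
          ext b
          simp only [Finset.mem_filter, Finset.mem_univ, true_and, h, not_false_iff, true_and,
            ← pow_succ']
          constructor
          · intro hh
            linear_combination hh
          · intro hh
            linear_combination hh
        rw [hfe]
        refine sC _ (neg_ne_zero.mpr (pow_ne_zero _ h)) ?_
        rw [hnegq, hpow]
    calc ∑ a : F, (Finset.univ.filter
          (fun b : F => ¬ a = 0 ∧ a * a ^ q + b * b ^ q = 0)).card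
        = ∑ a : F, (if a = 0 then 0 else q + 1) :=
          Finset.sum_congr rfl (fun a _ => hterm a)
      _ = (Finset.univ.filter (fun a : F => a = 0)).card * 0 +
          (Finset.univ.filter (fun a : F => ¬ a = 0)).card * (q + 1) := by
          rw [Finset.sum_ite, Finset.sum_const, Finset.sum_const, smul_eq_mul, smul_eq_mul]
      _ = (q + 1) * (q ^ 2 - 1) := by
          rw [hU, mul_zero, zero_add, mul_comm]
end
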